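/- Let C be a nonzero real number and let φ = diag(3C, C, −3C, −C) ∈ M₄(ℂ). Let j be an integer and let ψ₁, ψ₂ ∈ M₄(ℂ) satisfy ψᵢᵀ·J + J·ψᵢ = 0 for i = 1, 2 (i.e. ψ₁, ψ₂ ∈ sp(4,ℂ)). Suppose that −(j/2)·ψ₁ + (φψ₂ − ψ₂φ) = 0 and (j/2)·ψ₂ + (φψ₁ − ψ₁φ) = 0. Then there exist complex numbers a₁, d₁, a₂, d₂ such that ψᵢ = diag(aᵢ, dᵢ, −aᵢ, −dᵢ) for i = 1, 2; and if moreover j ≠ 0, then ψ₁ = ψ₂ = 0. -/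

import Mathlib

open Matrix

/-- The standard symplectic form matrix `J = (0, I₂; −I₂, 0)` on `ℂ⁴`. -/
def Jmat : Matrix (Fin 4) (Fin 4) ℂ :=
  !![0, 0, 1, 0;
     0, 0, 0, 1;
     -1, 0, 0, 0;
     0, -1, 0, 0]

/-- The residue `φ = diag(3C, C, −3C, −C)` of the model Sp(4,ℝ)-Higgs field. -/
noncomputable def phiRes (C : ℝ) : Matrix (Fin 4) (Fin 4) ℂ :=
  Matrix.diagonal ![3 * (C : ℂ), (C : ℂ), -3 * (C : ℂ), -(C : ℂ)]

lemma aux_scalar (j : ℤ) (r : ℝ) (x y : ℂ) (h : (j : ℝ) ≠ 0 ∨ r ≠ 0)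
    (h1 : -((j:ℂ)/2) * x + (r:ℂ) * y = 0)
    (h2 : ((j:ℂ)/2) * y + (r:ℂ) * x = 0) : x = 0 ∧ y = 0 := by
  have hr : ((j:ℝ)^2/4 + r^2) ≠ 0 := by
    rcases h with h | h
    · positivity
    · positivity
  have hrC : (((j:ℝ)^2/4 + r^2 : ℝ) : ℂ) ≠ 0 := by exact_mod_cast hr
  have hx : (((j:ℝ)^2/4 + r^2 : ℝ) : ℂ) * x = 0 := by
    push_cast
    linear_combination (r:ℂ) * h2 - ((j:ℂ)/2) * h1
  have hy : (((j:ℝ)^2/4 + r^2 : ℝ) : ℂ) * y = 0 := by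
    push_cast
    linear_combination ((j:ℂ)/2) * h2 + (r:ℂ) * h1
  exact ⟨by rcases mul_eq_zero.1 hx with h|h; exact absurd h hrC; exact h,
         by rcases mul_eq_zero.1 hy with h|h; exact absurd h hrC; exact h⟩

/-- The Fourier-mode reduction (Proposition 6.1 of the paper) of the kernel equation
`D(ψ₁,ψ₂) = 0` for the residue `φ = diag(3C, C, −3C, −C)` of the model Higgs field:
solutions in `sp(4,ℂ)` are diagonal of the form `diag(a, d, −a, −d)`, and vanish for
nonzero Fourier modes `j ≠ 0`. -/
theorem fourier_mode_kernel_diagonal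
    (C : ℝ) (hC : C ≠ 0) (j : ℤ) (ψ₁ ψ₂ : Matrix (Fin 4) (Fin 4) ℂ)
    (h₁ : ψ₁ᵀ * Jmat + Jmat * ψ₁ = 0) (h₂ : ψ₂ᵀ * Jmat + Jmat * ψ₂ = 0)
    (heq₁ : (-((j : ℂ) / 2)) • ψ₁ + (phiRes C * ψ₂ - ψ₂ * phiRes C) = 0)
    (heq₂ : ((j : ℂ) / 2) • ψ₂ + (phiRes C * ψ₁ - ψ₁ * phiRes C) = 0) :
    (∃ a₁ d₁ a₂ d₂ : ℂ,
      ψ₁ = Matrix.diagonal ![a₁, d₁, -a₁, -d₁] ∧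
      ψ₂ = Matrix.diagonal ![a₂, d₂, -a₂, -d₂]) ∧
    (j ≠ 0 → ψ₁ = 0 ∧ ψ₂ = 0) := by
  set dR : Fin 4 → ℝ := ![3*C, C, -3*C, -C] with hdR
  have hne : ∀ k l : Fin 4, k ≠ l → dR k - dR l ≠ 0 := by
    intro k l hkl h
    apply hC
    fin_cases k <;> fin_cases l <;> simp [hdR] at h hkl ⊢ <;> linarith
  have hphi : ∀ k : Fin 4, phiRes C k k = ((dR k : ℝ) : ℂ) := by
    intro k
    fin_cases k <;> simp [phiRes, hdR]
  have key : ∀ k l : Fin 4, (k ≠ l ∨ j ≠ 0) → ψ₁ k l = 0 ∧ ψ₂ k l = 0 := by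
    intro k l h
    have e1 := congrFun (congrFun heq₁ k) l
    have e2 := congrFun (congrFun heq₂ k) l
    simp only [phiRes, Matrix.add_apply, Matrix.sub_apply, Matrix.smul_apply,
      Matrix.diagonal_mul, Matrix.mul_diagonal, Matrix.zero_apply, smul_eq_mul] at e1 e2
    have hk := hphi k
    have hl := hphi l
    simp only [phiRes, Matrix.diagonal_apply_eq] at hk hl
    have e1' : -((j:ℂ)/2) * ψ₁ k l + ((dR k - dR l : ℝ) : ℂ) * ψ₂ k l = 0 := by
      push_cast
      rw [← hk, ← hl]
      linear_combination e1
    have e2' : ((j:ℂ)/2) * ψ₂ k l + ((dR k - dR l : ℝ) : ℂ) * ψ₁ k l = 0 := by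
      push_cast
      rw [← hk, ← hl]
      linear_combination e2
    apply aux_scalar j (dR k - dR l) _ _ _ e1' e2'
    rcases h with h | h
    · exact Or.inr (hne k l h)
    · exact Or.inl (by exact_mod_cast h)
  have off : ∀ k l : Fin 4, k ≠ l → ψ₁ k l = 0 ∧ ψ₂ k l = 0 := fun k l h => key k l (Or.inl h)
  have symp : ∀ ψ : Matrix (Fin 4) (Fin 4) ℂ, ψᵀ * Jmat + Jmat * ψ = 0 →
      ψ 2 2 = -ψ 0 0 ∧ ψ 3 3 = -ψ 1 1 := by
    intro ψ h
    have ha := congrFun (congrFun h 0) 2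
    have hb := congrFun (congrFun h 1) 3
    norm_num [Jmat, Matrix.mul_apply, Fin.sum_univ_four, Matrix.add_apply,
      Matrix.transpose_apply, Matrix.vecHead, Matrix.vecTail, Matrix.vecMul,
      dotProduct, Matrix.cons_val_zero, Matrix.cons_val_one, Matrix.cons_val_two, Matrix.cons_val_three, Matrix.head_cons] at ha hb
    constructor
    · linear_combination ha
    · linear_combination hb
  obtain ⟨s1a, s1b⟩ := symp ψ₁ h₁
  obtain ⟨s2a, s2b⟩ := symp ψ₂ h₂
  constructor
  · refine ⟨ψ₁ 0 0, ψ₁ 1 1, ψ₂ 0 0, ψ₂ 1 1, ?_, ?_⟩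
    · ext k l
      rcases eq_or_ne k l with rfl | h
      · fin_cases k <;> simp [Matrix.diagonal_apply_eq, s1a, s1b]
      · rw [Matrix.diagonal_apply_ne _ h]
        exact (off k l h).1
    · ext k l
      rcases eq_or_ne k l with rfl | h
      · fin_cases k <;> simp [Matrix.diagonal_apply_eq, s2a, s2b]
      · rw [Matrix.diagonal_apply_ne _ h]
        exact (off k l h).2
  · intro hj
    constructor <;> ext k l
    · exact (key k l (Or.inr hj)).1
    · exact (key k l (Or.inr hj)).2
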